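/- arXiv:1506.05506 — 2 statements merged into one kernel-verified Lean document; each statement's English description precedes it below -/
import Mathlib

section
/- The coefficient of determination for the perturbed response is R̃² = R²(1+b)/(1 + b + a(a+2)(1−R²)), where R² is the coefficient of determination of the original response. -/
open Matrix BigOperators

/-- Euclidean norm of a vector in ℝⁿ. -/
noncomputable def nrm {n : ℕ} (v : Fin n → ℝ) : ℝ := Real.sqrt (v ⬝ᵥ v)

lemma dp_self_nonneg {n : ℕ} (v : Fin n → ℝ) : 0 ≤ v ⬝ᵥ v :=
  Finset.sum_nonneg fun i _ => mul_self_nonneg _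

/-- R̃² = R²(1+b)/(1 + b + a(a+2)(1−R²)). -/
theorem R_squared_perturbed {n p : ℕ} (X : Matrix (Fin n) (Fin (p + 1)) ℝ)
    (hX : IsUnit (Xᵀ * X).det)
    (hone : ∃ j, ∀ i, X i j = 1)
    (y e : Fin n → ℝ)
    (he : e = y - X.mulVec ((Xᵀ * X)⁻¹.mulVec (Xᵀ.mulVec y)))
    (he0 : e ≠ 0)
    (ybar : ℝ) (hybar : ybar = (∑ i, y i) / (n : ℝ))
    (hy : y ≠ fun _ => ybar)
    (u : Fin n → ℝ) (hu0 : u ≠ 0)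
    (hXu : Xᵀ.mulVec u = 0) (heu : e ⬝ᵥ u = 0)
    (a b : ℝ) (ha : a ≠ 0) (hb : 0 ≤ b)
    (ε : Fin n → ℝ)
    (hε : ε = (a * nrm e / (1 + b)) •
        ((nrm e)⁻¹ • e + Real.sqrt b • ((nrm u)⁻¹ • u)))
    (R2 : ℝ) (hR2 : R2 = 1 - (nrm e) ^ 2 / (nrm (y - fun _ => ybar)) ^ 2)
    (R2t : ℝ)
    (hR2t : R2t = 1 - (nrm (e + ε)) ^ 2 / (nrm (y + ε - fun _ => ybar)) ^ 2)
    (hpos : 0 < 1 + b + a * (a + 2) * (1 - R2)) :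
    R2t = R2 * (1 + b) / (1 + b + a * (a + 2) * (1 - R2)) := by
  have hbpos : (0:ℝ) < 1 + b := by linarith
  -- basic quantities
  set s : ℝ := e ⬝ᵥ e with hs_def
  set q : ℝ := u ⬝ᵥ u with hq_def
  set d : Fin n → ℝ := y - fun _ => ybar with hd_def
  set t : ℝ := d ⬝ᵥ d with ht_def
  have hs : 0 < s := by
    rcases lt_or_eq_of_le (dp_self_nonneg e) with h | h
    · exact h
    · exact absurd (dotProduct_self_eq_zero.mp h.symm) he0
  have hq : 0 < q := by
    rcases lt_or_eq_of_le (dp_self_nonneg u) with h | h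
    · exact h
    · exact absurd (dotProduct_self_eq_zero.mp h.symm) hu0
  have hd0 : d ≠ 0 := by
    intro h
    apply hy
    funext i
    have := congrFun h i
    simpa [hd_def, sub_eq_zero] using this
  have ht : 0 < t := by
    rcases lt_or_eq_of_le (dp_self_nonneg d) with h | h
    · exact h
    · exact absurd (dotProduct_self_eq_zero.mp h.symm) hd0
  -- norms
  have hne2 : nrm e ^ 2 = s := Real.sq_sqrt hs.le
  have hnepos : 0 < nrm e := Real.sqrt_pos.mpr hs
  have hnu2 : nrm u ^ 2 = q := Real.sq_sqrt hq.le
  have hnupos : 0 < nrm u := Real.sqrt_pos.mpr hq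
  have hnd2 : nrm d ^ 2 = t := Real.sq_sqrt ht.le
  have hsb2 : Real.sqrt b ^ 2 = b := Real.sq_sqrt hb
  have hnee : (nrm e) ≠ 0 := ne_of_gt hnepos
  have hnue : (nrm u) ≠ 0 := ne_of_gt hnupos
  have hnb : (1 + b) ≠ 0 := ne_of_gt hbpos
  -- X'e = 0
  have hXe : Xᵀ.mulVec e = 0 := by
    rw [he, Matrix.mulVec_sub, Matrix.mulVec_mulVec, Matrix.mulVec_mulVec,
      Matrix.mul_nonsing_inv _ hX, Matrix.one_mulVec, sub_self]
  -- e ⊥ fitted values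
  have hefit : ∀ v : Fin (p+1) → ℝ, e ⬝ᵥ X.mulVec v = 0 := by
    intro v
    rw [Matrix.dotProduct_mulVec, ← Matrix.mulVec_transpose, hXe, zero_dotProduct]
  have hufit : ∀ v : Fin (p+1) → ℝ, u ⬝ᵥ X.mulVec v = 0 := by
    intro v
    rw [Matrix.dotProduct_mulVec, ← Matrix.mulVec_transpose, hXu, zero_dotProduct]
  -- sums of e and u are zero
  obtain ⟨j, hj⟩ := hone
  have hesum : ∑ i, e i = 0 := by
    have := congrFun hXe j
    simpa [Matrix.mulVec, dotProduct, Matrix.transpose_apply, hj] using this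
  have husum : ∑ i, u i = 0 := by
    have := congrFun hXu j
    simpa [Matrix.mulVec, dotProduct, Matrix.transpose_apply, hj] using this
  -- e ⬝ d = s
  have hey : e ⬝ᵥ y = s := by
    have h1 : e ⬝ᵥ y = e ⬝ᵥ (e + X.mulVec ((Xᵀ * X)⁻¹.mulVec (Xᵀ.mulVec y))) := by
      congr 1
      rw [he]; funext i; simp
    rw [h1, dotProduct_add, hefit, add_zero]
  have hec : e ⬝ᵥ (fun _ => ybar) = 0 := by
    simp only [dotProduct]
    rw [← Finset.sum_mul, hesum, zero_mul]
  have hed : e ⬝ᵥ d = s := by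
    rw [hd_def, dotProduct_sub, hey, hec, sub_zero]
  -- u ⬝ d = 0
  have huy : u ⬝ᵥ y = 0 := by
    have h1 : u ⬝ᵥ y = u ⬝ᵥ (e + X.mulVec ((Xᵀ * X)⁻¹.mulVec (Xᵀ.mulVec y))) := by
      congr 1
      rw [he]; funext i; simp
    rw [h1, dotProduct_add, hufit, add_zero, dotProduct_comm, heu]
  have huc : u ⬝ᵥ (fun _ => ybar) = 0 := by
    simp only [dotProduct]
    rw [← Finset.sum_mul, husum, zero_mul]
  have hud : u ⬝ᵥ d = 0 := by
    rw [hd_def, dotProduct_sub, huy, huc, sub_zero]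
  have hdu : d ⬝ᵥ u = 0 := by rw [dotProduct_comm, hud]
  have hde : d ⬝ᵥ e = s := by rw [dotProduct_comm, hed]
  have hue : u ⬝ᵥ e = 0 := by rw [dotProduct_comm, heu]
  -- the direction vector w
  set w : Fin n → ℝ := (nrm e)⁻¹ • e + Real.sqrt b • ((nrm u)⁻¹ • u) with hw_def
  have hinv_e : (nrm e)⁻¹ * s = nrm e := by
    rw [← hne2, sq, ← mul_assoc, inv_mul_cancel₀ hnee, one_mul]
  have hwe : e ⬝ᵥ w = nrm e := by
    simp only [hw_def, dotProduct_add, dotProduct_smul, smul_eq_mul,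
      heu, ← hs_def, mul_zero, add_zero]
    exact hinv_e
  have hwd : d ⬝ᵥ w = nrm e := by
    simp only [hw_def, dotProduct_add, dotProduct_smul, smul_eq_mul,
      hde, hdu, mul_zero, add_zero]
    exact hinv_e
  have hww : w ⬝ᵥ w = 1 + b := by
    simp only [hw_def, dotProduct_add, add_dotProduct,
      dotProduct_smul, smul_dotProduct, smul_eq_mul,
      heu, hue, ← hs_def, ← hq_def, mul_zero, zero_mul, add_zero, zero_add]
    have h1 : (nrm e)⁻¹ * ((nrm e)⁻¹ * s) = 1 := by
      rw [← hne2, sq]; field_simp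
    have h2 : Real.sqrt b * ((nrm u)⁻¹ * (Real.sqrt b * ((nrm u)⁻¹ * q))) = b := by
      rw [← hnu2, ← hsb2, sq, sq]; field_simp; rw [Real.sqrt_sq (Real.sqrt_nonneg b)]
    rw [h1, h2]
  -- dot products with ε
  have heps : e ⬝ᵥ ε = a * s / (1 + b) := by
    rw [hε, dotProduct_smul, smul_eq_mul, hwe]
    rw [div_mul_eq_mul_div, mul_assoc, ← sq, hne2]
  have hdeps : d ⬝ᵥ ε = a * s / (1 + b) := by
    rw [hε, dotProduct_smul, smul_eq_mul, hwd]
    rw [div_mul_eq_mul_div, mul_assoc, ← sq, hne2]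
  have hepse : ε ⬝ᵥ e = a * s / (1 + b) := by rw [dotProduct_comm, heps]
  have hepsd : ε ⬝ᵥ d = a * s / (1 + b) := by rw [dotProduct_comm, hdeps]
  have hepseps : ε ⬝ᵥ ε = a ^ 2 * s / (1 + b) := by
    rw [hε, dotProduct_smul, smul_dotProduct, smul_eq_mul,
      smul_eq_mul, hww]
    have h1 : a * nrm e / (1 + b) * (a * nrm e / (1 + b) * (1 + b))
        = a ^ 2 * (nrm e ^ 2) / (1 + b) := by
      field_simp
    rw [h1, hne2]
  -- numerator and denominator
  have hnum : (e + ε) ⬝ᵥ (e + ε) = s * (1 + b + a * (a + 2)) / (1 + b) := by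
    rw [dotProduct_add, add_dotProduct, add_dotProduct,
      heps, hepse, hepseps, ← hs_def]
    field_simp
    ring
  have hden : (d + ε) ⬝ᵥ (d + ε) = (t * (1 + b) + a * (a + 2) * s) / (1 + b) := by
    rw [dotProduct_add, add_dotProduct, add_dotProduct,
      hdeps, hepsd, hepseps, ← ht_def]
    field_simp
    ring
  have hrewrite : (y + ε - fun _ => ybar) = d + ε := by
    funext i
    show y i + ε i - ybar = (y i - ybar) + ε i
    ring
  -- positivity of denominator
  have hR2' : 1 - R2 = s / t := by
    rw [hR2, hne2, hnd2]; ring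
  have hdenpos : 0 < t * (1 + b) + a * (a + 2) * s := by
    have h1 : 0 < 1 + b + a * (a + 2) * (s / t) := by rw [← hR2']; exact hpos
    have h2 := mul_pos ht h1
    have heq : t * (1 + b + a * (a + 2) * (s / t)) = t * (1 + b) + a * (a + 2) * s := by
      field_simp
    linarith [heq ▸ h2]
  -- norm squares
  have hnum2 : nrm (e + ε) ^ 2 = s * (1 + b + a * (a + 2)) / (1 + b) := by
    rw [show nrm (e + ε) ^ 2 = (e + ε) ⬝ᵥ (e + ε) from
      Real.sq_sqrt (dp_self_nonneg _), hnum]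
  have hden2 : nrm (y + ε - fun _ => ybar) ^ 2 = (t * (1 + b) + a * (a + 2) * s) / (1 + b) := by
    rw [hrewrite, show nrm (d + ε) ^ 2 = (d + ε) ⬝ᵥ (d + ε) from
      Real.sq_sqrt (dp_self_nonneg _), hden]
  -- final computation
  have hR2eq : R2 = 1 - s / t := by linarith [hR2']
  have hcancel : (s * (1 + b + a * (a + 2)) / (1 + b)) /
      ((t * (1 + b) + a * (a + 2) * s) / (1 + b))
      = s * (1 + b + a * (a + 2)) / (t * (1 + b) + a * (a + 2) * s) := by
    rw [div_div_div_comm, div_self hnb, div_one]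
  have hdd2 : 1 + b + a * (a + 2) * (s / t) ≠ 0 := by
    have h : 1 + b + a * (a + 2) * (s / t)
        = (t * (1 + b) + a * (a + 2) * s) / t := by
      field_simp
    rw [h]
    exact div_ne_zero hdenpos.ne' ht.ne'
  rw [hR2t, hnum2, hden2, hcancel, hR2eq,
    show (1:ℝ) - (1 - s / t) = s / t by ring]
  rw [eq_div_iff hdd2, sub_mul, div_mul_eq_mul_div, mul_comm,
    ← div_mul_eq_mul_div]
  have hdn : t * (1 + b) + a * (a + 2) * s ≠ 0 := hdenpos.ne'
  have hkey : 1 + b + a * (a + 2) * (s / t) = (t * (1 + b) + a * (a + 2) * s) / t := by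
    field_simp
  rw [hkey]
  field_simp
  ring
end

section
/- Each t-value for the perturbed response satisfies t̃_j = ((1+b)/(1 + b + a(a+2)))^{1/2} t_j; in particular the ratio of the perturbed to original residual norm is ‖e + ε‖/‖e‖ = ((1 + b + a(a+2))/(1+b))^{1/2}. -/
open Matrix BigOperators

lemma nrm_pos {n : ℕ} {v : Fin n → ℝ} (hv : v ≠ 0) : 0 < nrm v := by
  have h0 : 0 ≤ v ⬝ᵥ v := Finset.sum_nonneg fun i _ => mul_self_nonneg _
  have hne : v ⬝ᵥ v ≠ 0 := fun h => hv (dotProduct_self_eq_zero.mp h)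
  exact Real.sqrt_pos.mpr (lt_of_le_of_ne h0 (Ne.symm hne))

lemma nrm_sq {n : ℕ} (v : Fin n → ℝ) : nrm v * nrm v = v ⬝ᵥ v :=
  Real.mul_self_sqrt (Finset.sum_nonneg fun i _ => mul_self_nonneg _)

/-- t̃_j = ((1+b)/(1 + b + a(a+2)))^{1/2} t_j for every j, and
‖e + ε‖/‖e‖ = ((1 + b + a(a+2))/(1+b))^{1/2}. -/
theorem t_values_perturbed {n p : ℕ} (X : Matrix (Fin n) (Fin (p + 1)) ℝ)
    (hX : IsUnit (Xᵀ * X).det) (hn : p + 1 < n)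
    (y e : Fin n → ℝ)
    (he : e = y - X.mulVec ((Xᵀ * X)⁻¹.mulVec (Xᵀ.mulVec y)))
    (he0 : e ≠ 0) (u : Fin n → ℝ) (hu0 : u ≠ 0)
    (hXu : Xᵀ.mulVec u = 0) (heu : e ⬝ᵥ u = 0)
    (a b : ℝ) (ha : a ≠ 0) (hb : 0 ≤ b)
    (hpos : 0 < 1 + b + a * (a + 2))
    (ε : Fin n → ℝ)
    (hε : ε = (a * nrm e / (1 + b)) •
        ((nrm e)⁻¹ • e + Real.sqrt b • ((nrm u)⁻¹ • u)))
    (βhat βhatt : Fin (p + 1) → ℝ)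
    (hβ : βhat = (Xᵀ * X)⁻¹.mulVec (Xᵀ.mulVec y))
    (hβt : βhatt = (Xᵀ * X)⁻¹.mulVec (Xᵀ.mulVec (y + ε)))
    (d : Fin (p + 1) → ℝ) (hd : d = fun j => (Xᵀ * X)⁻¹ j j)
    (t tt : Fin (p + 1) → ℝ)
    (ht : t = fun j => Real.sqrt ((n : ℝ) - p - 1) / d j * (βhat j / nrm e))
    (htt : tt = fun j =>
      Real.sqrt ((n : ℝ) - p - 1) / d j *
        (βhatt j / nrm ((y + ε) - X.mulVec βhatt))) :
    (∀ j, tt j = Real.sqrt ((1 + b) / (1 + b + a * (a + 2))) * t j) ∧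
      nrm (e + ε) / nrm e = Real.sqrt ((1 + b + a * (a + 2)) / (1 + b)) := by
  have hb1 : (0:ℝ) < 1 + b := by linarith
  have hne : 0 < nrm e := nrm_pos he0
  have hnu : 0 < nrm u := nrm_pos hu0
  -- X'e = 0
  have hXe : Xᵀ.mulVec e = 0 := by
    rw [he, Matrix.mulVec_sub, Matrix.mulVec_mulVec, Matrix.mulVec_mulVec,
      Matrix.mul_nonsing_inv _ hX, Matrix.one_mulVec, sub_self]
  -- X'ε = 0
  have hXε : Xᵀ.mulVec ε = 0 := by
    rw [hε, Matrix.mulVec_smul, Matrix.mulVec_add, Matrix.mulVec_smul,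
      Matrix.mulVec_smul, Matrix.mulVec_smul, hXe, hXu]
    simp
  -- βhatt = βhat
  have hββ : βhatt = βhat := by
    rw [hβt, hβ, Matrix.mulVec_add, hXε, add_zero]
  -- residual
  have hres : (y + ε) - X.mulVec βhatt = e + ε := by
    rw [hββ, hβ, he]; abel
  -- dot product computation
  have hue : u ⬝ᵥ e = 0 := by rw [dotProduct_comm]; exact heu
  have hee : e ⬝ᵥ e = nrm e * nrm e := (nrm_sq e).symm
  have huu : u ⬝ᵥ u = nrm u * nrm u := (nrm_sq u).symm
  have hsb : Real.sqrt b * Real.sqrt b = b := Real.mul_self_sqrt hb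
  have hkey : (e + ε) ⬝ᵥ (e + ε) =
      nrm e * nrm e * ((1 + b + a * (a + 2)) / (1 + b)) := by
    rw [hε]
    simp only [dotProduct_add, add_dotProduct, smul_dotProduct, dotProduct_smul,
      smul_eq_mul]
    rw [hee, huu, heu, hue]
    field_simp
    ring_nf
    rw [Real.sq_sqrt hb]
    ring
  have hnres : nrm (e + ε) = nrm e * Real.sqrt ((1 + b + a * (a + 2)) / (1 + b)) := by
    rw [nrm, hkey, Real.sqrt_mul (by positivity), Real.sqrt_mul_self hne.le]
  have hrpos : (0:ℝ) < (1 + b + a * (a + 2)) / (1 + b) := by positivity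
  constructor
  · intro j
    rw [htt, ht, hres, hββ, hnres]
    have h1 : Real.sqrt ((1 + b) / (1 + b + a * (a + 2))) =
        (Real.sqrt ((1 + b + a * (a + 2)) / (1 + b)))⁻¹ := by
      rw [← Real.sqrt_inv, inv_div]
    rw [h1]
    have hs : Real.sqrt ((1 + b + a * (a + 2)) / (1 + b)) ≠ 0 :=
      ne_of_gt (Real.sqrt_pos.mpr hrpos)
    field_simp
  · rw [hnres]
    field_simp
end
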